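/- For every finite word w over {0,1,2}, the vector (x,y,z)^T = E_w (2,2,2)^T satisfies 14x - y - z > 0. -/

import Mathlib

open Matrix BigOperators

/-- The matrix `E_0`. -/
noncomputable def E0 : Matrix (Fin 3) (Fin 3) ℝ :=
  !![47/75, -1/25, -1/25; 14/75, 3/25, -2/25; 14/75, -2/25, 3/25]

/-- The matrix `E_1`. -/
noncomputable def E1 : Matrix (Fin 3) (Fin 3) ℝ :=
  !![3/25, 14/75, -2/25; -1/25, 47/75, -1/25; -2/25, 14/75, 3/25]

/-- The matrix `E_2`. -/
noncomputable def E2 : Matrix (Fin 3) (Fin 3) ℝ :=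
  !![3/25, -2/25, 14/75; -2/25, 3/25, 14/75; -1/25, -1/25, 47/75]

/-- `Emat i` is the matrix `E_i`. -/
noncomputable def Emat : Fin 3 → Matrix (Fin 3) (Fin 3) ℝ := ![E0, E1, E2]

/-- For a word `w = [w₁, ..., wₘ]`, `Eword w = E_{wₘ} * ⋯ * E_{w₁}`
(the empty word giving the identity matrix). -/
noncomputable def Eword (w : List (Fin 3)) : Matrix (Fin 3) (Fin 3) ℝ :=
  ((w.map Emat).reverse).prod

/-- The invariant predicate: with `a = 14x-y-z`, `b = 14y-x-z`, `c = 14z-x-y` we have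
`a,b,c > 0` and `a² + b² + c² < 2(ab + bc + ca)`. -/
def Good (v : Fin 3 → ℝ) : Prop :=
  0 < 14 * v 0 - v 1 - v 2 ∧ 0 < 14 * v 1 - v 0 - v 2 ∧ 0 < 14 * v 2 - v 0 - v 1 ∧
    (14 * v 0 - v 1 - v 2) ^ 2 + (14 * v 1 - v 0 - v 2) ^ 2 + (14 * v 2 - v 0 - v 1) ^ 2
      < 2 * ((14 * v 0 - v 1 - v 2) * (14 * v 1 - v 0 - v 2)
          + (14 * v 1 - v 0 - v 2) * (14 * v 2 - v 0 - v 1)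
          + (14 * v 2 - v 0 - v 1) * (14 * v 0 - v 1 - v 2))

lemma good_E0 (v : Fin 3 → ℝ) (h : Good v) : Good (E0 *ᵥ v) := by
  obtain ⟨hA, hB, hC, hq⟩ := h
  have e0 : (E0 *ᵥ v) 0 = 47/75 * v 0 - 1/25 * v 1 - 1/25 * v 2 := by
    simp [E0, Matrix.mulVec, dotProduct, Fin.sum_univ_three]; try ring
  have e1 : (E0 *ᵥ v) 1 = 14/75 * v 0 + 3/25 * v 1 - 2/25 * v 2 := by
    simp [E0, Matrix.mulVec, dotProduct, Fin.sum_univ_three]; try ring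
  have e2 : (E0 *ᵥ v) 2 = 14/75 * v 0 - 2/25 * v 1 + 3/25 * v 2 := by
    simp [E0, Matrix.mulVec, dotProduct, Fin.sum_univ_three]; try ring
  unfold Good
  rw [e0, e1, e2]
  refine ⟨by linarith, by nlinarith [hq, hC, sq_nonneg (v 0 - v 1)],
    by nlinarith [hq, hB, sq_nonneg (v 0 - v 2)], by nlinarith [hq]⟩

lemma good_E1 (v : Fin 3 → ℝ) (h : Good v) : Good (E1 *ᵥ v) := by
  obtain ⟨hA, hB, hC, hq⟩ := h
  have e0 : (E1 *ᵥ v) 0 = 3/25 * v 0 + 14/75 * v 1 - 2/25 * v 2 := by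
    simp [E1, Matrix.mulVec, dotProduct, Fin.sum_univ_three]; try ring
  have e1 : (E1 *ᵥ v) 1 = -1/25 * v 0 + 47/75 * v 1 - 1/25 * v 2 := by
    simp [E1, Matrix.mulVec, dotProduct, Fin.sum_univ_three]; try ring
  have e2 : (E1 *ᵥ v) 2 = -2/25 * v 0 + 14/75 * v 1 + 3/25 * v 2 := by
    simp [E1, Matrix.mulVec, dotProduct, Fin.sum_univ_three]; try ring
  unfold Good
  rw [e0, e1, e2]
  refine ⟨by nlinarith [hq, hC, sq_nonneg (v 0 - v 1)], by linarith,
    by nlinarith [hq, hA, sq_nonneg (v 1 - v 2)], by nlinarith [hq]⟩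

lemma good_E2 (v : Fin 3 → ℝ) (h : Good v) : Good (E2 *ᵥ v) := by
  obtain ⟨hA, hB, hC, hq⟩ := h
  have e0 : (E2 *ᵥ v) 0 = 3/25 * v 0 - 2/25 * v 1 + 14/75 * v 2 := by
    simp [E2, Matrix.mulVec, dotProduct, Fin.sum_univ_three]; try ring
  have e1 : (E2 *ᵥ v) 1 = -2/25 * v 0 + 3/25 * v 1 + 14/75 * v 2 := by
    simp [E2, Matrix.mulVec, dotProduct, Fin.sum_univ_three]; try ring
  have e2 : (E2 *ᵥ v) 2 = -1/25 * v 0 - 1/25 * v 1 + 47/75 * v 2 := by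
    simp [E2, Matrix.mulVec, dotProduct, Fin.sum_univ_three]; try ring
  unfold Good
  rw [e0, e1, e2]
  refine ⟨by nlinarith [hq, hB, sq_nonneg (v 0 - v 2)],
    by nlinarith [hq, hA, sq_nonneg (v 1 - v 2)], by linarith, by nlinarith [hq]⟩

lemma good_step (i : Fin 3) (v : Fin 3 → ℝ) (h : Good v) : Good (Emat i *ᵥ v) := by
  fin_cases i
  · exact good_E0 v h
  · exact good_E1 v h
  · exact good_E2 v h

lemma eword_cons (i : Fin 3) (w : List (Fin 3)) :
    Eword (i :: w) = Eword w * Emat i := by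
  simp [Eword]

lemma good_word (w : List (Fin 3)) : ∀ v : Fin 3 → ℝ, Good v → Good (Eword w *ᵥ v) := by
  induction w with
  | nil => intro v hv; simpa [Eword] using hv
  | cons i t ih =>
      intro v hv
      rw [eword_cons, ← Matrix.mulVec_mulVec]
      exact ih _ (good_step i v hv)

/-- For every finite word `w` over `{0,1,2}`, the vector
`(x,y,z)ᵀ = E_w (2,2,2)ᵀ` satisfies `14x - y - z > 0`. -/
theorem stmt_0 (w : List (Fin 3)) :
    14 * (Eword w *ᵥ ![2, 2, 2]) 0 - (Eword w *ᵥ ![2, 2, 2]) 1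
      - (Eword w *ᵥ ![2, 2, 2]) 2 > 0 := by
  have hgood : Good ![2, 2, 2] := by
    have h2 : (![2, 2, 2] : Fin 3 → ℝ) 2 = 2 := rfl
    norm_num [Good, h2]
  exact (good_word w ![2, 2, 2] hgood).1
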